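/- Let k > 0, α ∈ (0,1), let r_g : [0,∞) → ℝ² be differentiable, and let r : [0,∞) → ℝ² be differentiable with r'(t) = -k·(r(t) - r_g(t))·‖r(t) - r_g(t)‖^(α-1) + r_g'(t) whenever r(t) ≠ r_g(t), and r'(t) = r_g'(t) whenever r(t) = r_g(t). Then r(t) = r_g(t) for all t ≥ ‖r(0) - r_g(0)‖^(1-α)/(k·(1-α)). -/

import Mathlib

open Real Set

/-- Finite-time trajectory tracking: if `r' = -k·(r - r_g)·‖r - r_g‖^(α-1) + r_g'`
(with `r' = r_g'` when `r = r_g`), then `r` reaches `r_g` by time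
`‖r(0)-r_g(0)‖^(1-α)/(k(1-α))`. -/
theorem stmt_6 (k α : ℝ) (hk : 0 < k) (hα0 : 0 < α) (hα1 : α < 1)
    (rg : ℝ → EuclideanSpace ℝ (Fin 2)) (hrg : ∀ t, 0 ≤ t → DifferentiableAt ℝ rg t)
    (r : ℝ → EuclideanSpace ℝ (Fin 2))
    (hr : ∀ t, 0 ≤ t → r t ≠ rg t →
      HasDerivAt r ((-k * ‖r t - rg t‖ ^ (α - 1)) • (r t - rg t) + deriv rg t) t)
    (hr0 : ∀ t, 0 ≤ t → r t = rg t → HasDerivAt r (deriv rg t) t) :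
    ∀ t, ‖r 0 - rg 0‖ ^ (1 - α) / (k * (1 - α)) ≤ t → r t = rg t := by
  intro t ht
  set e : ℝ → EuclideanSpace ℝ (Fin 2) := fun s => r s - rg s with he
  set c : ℝ := k * (1 - α) with hc
  have hc0 : 0 < c := mul_pos hk (by linarith)
  have ht0 : 0 ≤ t :=
    le_trans (div_nonneg (Real.rpow_nonneg (norm_nonneg _) _) hc0.le) ht
  have h00 : ‖r 0 - rg 0‖ = ‖e 0‖ := rfl
  rw [h00] at ht
  -- derivative of the error
  have hE : ∀ s, 0 ≤ s → HasDerivAt e ((-k * ‖e s‖ ^ (α - 1)) • (e s)) s := by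
    intro s hs
    by_cases hrs : r s = rg s
    · have h0 : r s - rg s = 0 := sub_eq_zero.2 hrs
      have := (hr0 s hs hrs).sub (hrg s hs).hasDerivAt
      exact this.congr_deriv (by simp [he, h0])
    · have := (hr s hs hrs).sub (hrg s hs).hasDerivAt
      exact this.congr_deriv (by simp [he])
  -- derivative of φ = ⟪e, e⟫
  set φ : ℝ → ℝ := fun s => inner ℝ (e s) (e s) with hφdef
  have hφnorm : ∀ s, φ s = ‖e s‖ ^ (2 : ℕ) := fun s => real_inner_self_eq_norm_sq (e s)
  have hφ : ∀ s, 0 ≤ s → HasDerivAt φ (-(2 * k) * ‖e s‖ ^ (α + 1)) s := by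
    intro s hs
    have h1 := (hE s hs).inner ℝ (hE s hs)
    have h2 : (inner ℝ (e s) ((-k * ‖e s‖ ^ (α - 1)) • e s) : ℝ)
        + inner ℝ ((-k * ‖e s‖ ^ (α - 1)) • e s) (e s)
        = -(2 * k) * ‖e s‖ ^ (α + 1) := by
      rw [real_inner_smul_left, real_inner_smul_right, real_inner_self_eq_norm_sq]
      by_cases hz : e s = 0
      · simp [hz, Real.zero_rpow (by positivity : α + 1 ≠ 0)]
      · have hpos : (0:ℝ) < ‖e s‖ := norm_pos_iff.2 hz
        have h3 : ‖e s‖ ^ (2:ℕ) = ‖e s‖ ^ (2:ℝ) := by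
          rw [← Real.rpow_natCast ‖e s‖ 2]; norm_num
        have h4 : ‖e s‖ ^ (α - 1) * ‖e s‖ ^ (2:ℝ) = ‖e s‖ ^ (α + 1) := by
          rw [← Real.rpow_add hpos]; ring_nf
        rw [h3]
        linear_combination (-(2:ℝ) * k) * h4
    rw [h2] at h1
    exact h1
  -- φ is antitone on [0, ∞)
  have hφcont : ContinuousOn φ (Ici 0) := fun s hs =>
    ((hφ s hs).differentiableAt.continuousAt).continuousWithinAt
  have hφanti : AntitoneOn φ (Ici 0) := by
    apply antitoneOn_of_deriv_nonpos (convex_Ici 0) hφcont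
    · intro s hs
      rw [interior_Ici] at hs
      exact ((hφ s (le_of_lt hs)).differentiableAt).differentiableWithinAt
    · intro s hs
      rw [interior_Ici] at hs
      rw [(hφ s hs.le).deriv]
      have : (0:ℝ) ≤ ‖e s‖ ^ (α + 1) := Real.rpow_nonneg (norm_nonneg _) _
      nlinarith
  -- main argument by contradiction
  by_contra hcon
  have het : e t ≠ 0 := sub_ne_zero.2 hcon
  have hetpos : (0:ℝ) < ‖e t‖ := norm_pos_iff.2 het
  have hnz : ∀ s ∈ Icc (0:ℝ) t, (0:ℝ) < φ s := by
    intro s hs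
    have h1 : φ t ≤ φ s := hφanti hs.1 (le_trans hs.1 hs.2) hs.2
    have h2 : 0 < φ t := by rw [hφnorm]; positivity
    linarith
  set p : ℝ := (1 - α) / 2 with hp
  set ψ : ℝ → ℝ := fun s => φ s ^ p + c * s with hψ
  have hψd : ∀ s ∈ Icc (0:ℝ) t, HasDerivAt ψ 0 s := by
    intro s hs
    have hφs : 0 < φ s := hnz s hs
    have h1 : HasDerivAt (fun u => φ u ^ p)
        (-(2 * k) * ‖e s‖ ^ (α + 1) * p * φ s ^ (p - 1)) s :=
      (hφ s hs.1).rpow_const (Or.inl hφs.ne')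
    have h2 : HasDerivAt (fun u : ℝ => c * u) c s := by
      simpa using (hasDerivAt_id s).const_mul c
    have key : -(2 * k) * ‖e s‖ ^ (α + 1) * p * φ s ^ (p - 1) = -c := by
      have hnorm : ‖e s‖ ^ (α + 1) = φ s ^ ((α + 1) / 2) := by
        rw [hφnorm, ← Real.rpow_natCast ‖e s‖ 2, ← Real.rpow_mul (norm_nonneg _)]
        congr 1
        push_cast
        ring
      have hsum : φ s ^ ((α + 1) / 2) * φ s ^ (p - 1) = 1 := by
        rw [← Real.rpow_add hφs, show (α + 1) / 2 + (p - 1) = 0 by rw [hp]; ring,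
          Real.rpow_zero]
      have hc2 : c = 2 * k * p := by rw [hc, hp]; ring
      rw [hnorm]
      linear_combination (-(2:ℝ) * k * p) * hsum + hc2
    have := h1.add h2
    rw [key] at this
    exact this.congr_deriv (by ring)
  have hψcont : ContinuousOn ψ (Icc 0 t) := fun s hs =>
    ((hψd s hs).differentiableAt.continuousAt).continuousWithinAt
  have hconst : ψ t = ψ 0 :=
    constant_of_has_deriv_right_zero hψcont
      (fun s hs => ((hψd s (Ico_subset_Icc_self hs)).hasDerivWithinAt))
      t (right_mem_Icc.2 ht0)
  -- translate back to norms
  have hφp : ∀ s, φ s ^ p = ‖e s‖ ^ (1 - α) := by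
    intro s
    rw [hφnorm, ← Real.rpow_natCast ‖e s‖ 2, ← Real.rpow_mul (norm_nonneg _), hp]
    congr 1
    push_cast
    ring
  have heq : ‖e t‖ ^ (1 - α) + c * t = ‖e 0‖ ^ (1 - α) := by
    have := hconst
    simp only [hψ, hφp, mul_zero, add_zero] at this
    linarith [this]
  have hT : ‖e 0‖ ^ (1 - α) ≤ c * t := by
    have := (div_le_iff₀ hc0).1 ht
    linarith [this]
  have hpos : (0:ℝ) < ‖e t‖ ^ (1 - α) := Real.rpow_pos_of_pos hetpos _
  linarith
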